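/- Controlled growth of averaged matrices: Let n ≥ 3, d ≥ 1 and 1 < p < ∞. If V is a matrix weight on ℝⁿ belonging to 𝓑_p with constant C_V, then for every x ∈ ℝⁿ, all 0 < r < R < ∞, and every e ∈ ℝᵈ, ⟨Ψ(x,r;V)e,e⟩ ≤ C_V (r/R)^{2−n/p} ⟨Ψ(x,R;V)e,e⟩; equivalently, Ψ(x,r;V) ≤ C_V (r/R)^{2−n/p} Ψ(x,R;V) in the positive semidefinite order. -/

import Mathlib

open MeasureTheory
open scoped ComplexOrder

noncomputable section

/-- The open cube in `ℝⁿ` centered at `x` with half side length `r` (side length `2r`). -/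
def cube {n : ℕ} (x : Fin n → ℝ) (r : ℝ) : Set (Fin n → ℝ) :=
  {y | ∀ i, |y i - x i| < r}

/-- Entrywise integral of a real matrix-valued function over a set. -/
def matInt {n d : ℕ} (V : (Fin n → ℝ) → Matrix (Fin d) (Fin d) ℝ)
    (s : Set (Fin n → ℝ)) : Matrix (Fin d) (Fin d) ℝ :=
  Matrix.of fun i j => ∫ y in s, V y i j

/-- Entrywise average of a real matrix-valued function over a set. -/
def matAvg {n d : ℕ} (V : (Fin n → ℝ) → Matrix (Fin d) (Fin d) ℝ)
    (s : Set (Fin n → ℝ)) : Matrix (Fin d) (Fin d) ℝ :=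
  Matrix.of fun i j => ⨍ y in s, V y i j

/-- The quadratic form `⟨A e, e⟩`. -/
def qf {d : ℕ} (A : Matrix (Fin d) (Fin d) ℝ) (e : Fin d → ℝ) : ℝ :=
  dotProduct e (A.mulVec e)

/-- Squared Euclidean norm of a real vector. -/
def vnormSq {d : ℕ} (e : Fin d → ℝ) : ℝ := ∑ i, e i ^ 2

/-- The Euclidean operator norm of a real square matrix (its largest singular value). -/
def matOpNorm {d : ℕ} (A : Matrix (Fin d) (Fin d) ℝ) : ℝ :=
  sSup {t : ℝ | ∃ e : Fin d → ℝ, vnormSq e = 1 ∧ t = Real.sqrt (vnormSq (A.mulVec e))}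

/-- `V` is a matrix weight: measurable, a.e. symmetric positive semidefinite, and with
locally integrable operator norm. -/
def IsMatrixWeight {n d : ℕ} (V : (Fin n → ℝ) → Matrix (Fin d) (Fin d) ℝ) : Prop :=
  (∀ i j, Measurable fun x => V x i j) ∧
  (∀ᵐ (x : Fin n → ℝ) ∂volume, (V x).PosSemidef) ∧
  ∀ (x : Fin n → ℝ) (r : ℝ), 0 < r → IntegrableOn (fun y => matOpNorm (V y)) (cube x r)

/-- The matrix reverse Hölder class `𝓑_p` with constant `C`. -/
def MemBp {n d : ℕ} (p C : ℝ) (V : (Fin n → ℝ) → Matrix (Fin d) (Fin d) ℝ) : Prop :=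
  (∀ (x : Fin n → ℝ) (r : ℝ), 0 < r →
    IntegrableOn (fun y => matOpNorm (V y) ^ p) (cube x r)) ∧
  ∀ (x : Fin n → ℝ) (r : ℝ), 0 < r → ∀ e : Fin d → ℝ,
    (⨍ y in cube x r, qf (V y) e ^ p) ^ (1 / p) ≤ C * qf (matAvg V (cube x r)) e

/-- The scalar reverse Hölder class `B_p` with constant `C`. -/
def MemBpScalar {n : ℕ} (p C : ℝ) (v : (Fin n → ℝ) → ℝ) : Prop :=
  (∀ (x : Fin n → ℝ) (r : ℝ), 0 < r → IntegrableOn (fun y => v y ^ p) (cube x r)) ∧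
  ∀ (x : Fin n → ℝ) (r : ℝ), 0 < r →
    (⨍ y in cube x r, v y ^ p) ^ (1 / p) ≤ C * ⨍ y in cube x r, v y

/-- The averaged matrix `Ψ(x,r;V) = r^{2-n} ∫_{Q(x,r)} V`. -/
def Psi {n d : ℕ} (x : Fin n → ℝ) (r : ℝ)
    (V : (Fin n → ℝ) → Matrix (Fin d) (Fin d) ℝ) : Matrix (Fin d) (Fin d) ℝ :=
  r ^ ((2 : ℝ) - n) • matInt V (cube x r)

/-- The nondegeneracy class `ND`. -/
def MemND {n d : ℕ} (V : (Fin n → ℝ) → Matrix (Fin d) (Fin d) ℝ) : Prop :=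
  ∀ E : Set (Fin n → ℝ), MeasurableSet E → 0 < volume E → (matInt V E).PosDef

/-- The set of radii used to define the lower auxiliary function. -/
def lowerSet {n d : ℕ} (V : (Fin n → ℝ) → Matrix (Fin d) (Fin d) ℝ)
    (x : Fin n → ℝ) : Set ℝ :=
  {r : ℝ | 0 < r ∧ ∃ e : Fin d → ℝ, vnormSq e = 1 ∧ qf (Psi x r V) e ≤ 1}

/-- The lower auxiliary function `m̲(x,V)`. -/
def mLower {n d : ℕ} (V : (Fin n → ℝ) → Matrix (Fin d) (Fin d) ℝ) (x : Fin n → ℝ) : ℝ :=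
  (sSup (lowerSet V x))⁻¹

/-- The set of radii used to define the upper auxiliary function. -/
def upperSet {n d : ℕ} (V : (Fin n → ℝ) → Matrix (Fin d) (Fin d) ℝ)
    (x : Fin n → ℝ) : Set ℝ :=
  {r : ℝ | 0 < r ∧ matOpNorm (Psi x r V) ≤ 1}

/-- The upper auxiliary function `m̄(x,V)`. -/
def mUpper {n d : ℕ} (V : (Fin n → ℝ) → Matrix (Fin d) (Fin d) ℝ) (x : Fin n → ℝ) : ℝ :=
  (sSup (upperSet V x))⁻¹

/-- The set of radii used to define the scalar auxiliary function. -/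
def scalSet {n : ℕ} (v : (Fin n → ℝ) → ℝ) (x : Fin n → ℝ) : Set ℝ :=
  {r : ℝ | 0 < r ∧ r ^ ((2 : ℝ) - n) * ∫ y in cube x r, v y ≤ 1}

/-- The scalar auxiliary function `m(x,v)`. -/
def mScal {n : ℕ} (v : (Fin n → ℝ) → ℝ) (x : Fin n → ℝ) : ℝ :=
  (sSup (scalSet v x))⁻¹

/-- The positive semidefinite square root of a matrix (junk value `0` off the
positive semidefinite matrices). -/
def msqrt {d : ℕ} (A : Matrix (Fin d) (Fin d) ℝ) : Matrix (Fin d) (Fin d) ℝ :=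
  @dite _ A.PosSemidef (Classical.dec _) (fun h => h.1.eigenvectorUnitary.1 *
    Matrix.diagonal ((↑) ∘ Real.sqrt ∘ h.1.eigenvalues) *
    (star h.1.eigenvectorUnitary : Matrix (Fin d) (Fin d) ℝ)) fun _ => 0

/-- The noncommutativity class `NC` with constant `N`. -/
def MemNC {n d : ℕ} (N : ℝ) (V : (Fin n → ℝ) → Matrix (Fin d) (Fin d) ℝ) : Prop :=
  ∀ (x : Fin n → ℝ) (e : Fin d → ℝ),
    N * vnormSq e ≤
      ∫ y in cube x (mLower V x)⁻¹,
        qf (msqrt (V y) * (matInt V (cube x (mLower V x)⁻¹))⁻¹ * msqrt (V y)) e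

/-- The matrix `𝓐_∞` class. -/
def MemAinf {n d : ℕ} (V : (Fin n → ℝ) → Matrix (Fin d) (Fin d) ℝ) : Prop :=
  ∀ ε : ℝ, 0 < ε → ∃ δ : ℝ, 0 < δ ∧ ∀ (x : Fin n → ℝ) (r : ℝ), 0 < r →
    ENNReal.ofReal (1 - ε) * volume (cube x r) ≤
      volume {y ∈ cube x r | (V y - δ • matAvg V (cube x r)).PosSemidef}

/-- The smallest eigenvalue of a symmetric matrix (as the infimum of the Rayleigh
quotient over the unit sphere). -/
def lam1 {d : ℕ} (A : Matrix (Fin d) (Fin d) ℝ) : ℝ :=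
  sInf {t : ℝ | ∃ e : Fin d → ℝ, vnormSq e = 1 ∧ t = qf A e}

/-- Squared Frobenius norm of the Jacobian matrix `Du(x)`. -/
def jacFrobSq {n d : ℕ} (u : (Fin n → ℝ) → Fin d → ℝ) (x : Fin n → ℝ) : ℝ :=
  ∑ j, ∑ i, (fderiv ℝ u x (Pi.single i 1) j) ^ 2

/-! ### Complex (Hermitian) versions -/

/-- The (real-valued) quadratic form `⟨A e, e⟩` of a Hermitian matrix. -/
def qfC {d : ℕ} (A : Matrix (Fin d) (Fin d) ℂ) (e : Fin d → ℂ) : ℝ :=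
  (dotProduct (star e) (A.mulVec e)).re

/-- Squared Euclidean norm of a complex vector. -/
def vnormSqC {d : ℕ} (e : Fin d → ℂ) : ℝ := ∑ i, Complex.normSq (e i)

/-- Entrywise integral of a complex matrix-valued function over a set. -/
def matIntC {n d : ℕ} (V : (Fin n → ℝ) → Matrix (Fin d) (Fin d) ℂ)
    (s : Set (Fin n → ℝ)) : Matrix (Fin d) (Fin d) ℂ :=
  Matrix.of fun i j => ∫ y in s, V y i j

/-- Entrywise average of a complex matrix-valued function over a set. -/
def matAvgC {n d : ℕ} (V : (Fin n → ℝ) → Matrix (Fin d) (Fin d) ℂ)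
    (s : Set (Fin n → ℝ)) : Matrix (Fin d) (Fin d) ℂ :=
  Matrix.of fun i j => ⨍ y in s, V y i j

/-- The Euclidean operator norm of a complex square matrix. -/
def matOpNormC {d : ℕ} (A : Matrix (Fin d) (Fin d) ℂ) : ℝ :=
  sSup {t : ℝ | ∃ e : Fin d → ℂ, vnormSqC e = 1 ∧ t = Real.sqrt (vnormSqC (A.mulVec e))}

/-- `V` is a Hermitian matrix weight. -/
def IsHermWeight {n d : ℕ} (V : (Fin n → ℝ) → Matrix (Fin d) (Fin d) ℂ) : Prop :=
  (∀ i j, Measurable fun x => V x i j) ∧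
  (∀ᵐ (x : Fin n → ℝ) ∂volume, (V x).PosSemidef) ∧
  ∀ (x : Fin n → ℝ) (r : ℝ), 0 < r → IntegrableOn (fun y => matOpNormC (V y)) (cube x r)

/-- The nondegeneracy class `ND` for Hermitian weights. -/
def MemNDC {n d : ℕ} (V : (Fin n → ℝ) → Matrix (Fin d) (Fin d) ℂ) : Prop :=
  ∀ E : Set (Fin n → ℝ), MeasurableSet E → 0 < volume E → (matIntC V E).PosDef

/-- The matrix `𝓐_∞` class for Hermitian weights. -/
def MemAinfC {n d : ℕ} (V : (Fin n → ℝ) → Matrix (Fin d) (Fin d) ℂ) : Prop :=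
  ∀ ε : ℝ, 0 < ε → ∃ δ : ℝ, 0 < δ ∧ ∀ (x : Fin n → ℝ) (r : ℝ), 0 < r →
    ENNReal.ofReal (1 - ε) * volume (cube x r) ≤
      volume {y ∈ cube x r | (V y - δ • matAvgC V (cube x r)).PosSemidef}

/-- The geometric average `exp(⨍_s ln w)` of a nonnegative function, with the
conventions `ln 0 = -∞` and `exp (-∞) = 0`. -/
def geomMean {n : ℕ} (w : (Fin n → ℝ) → ℝ) (s : Set (Fin n → ℝ)) : ℝ :=
  @ite _ ((∀ᵐ y ∂(volume.restrict s), 0 < w y) ∧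
      IntegrableOn (fun y => Real.log (w y)) s) (Classical.dec _)
    (Real.exp (⨍ y in s, Real.log (w y))) 0

/-- The scalar `A_∞` class. -/
def ScalarAinf {n : ℕ} (w : (Fin n → ℝ) → ℝ) : Prop :=
  ∀ ε : ℝ, 0 < ε → ∃ δ : ℝ, 0 < δ ∧ ∀ (x : Fin n → ℝ) (r : ℝ), 0 < r →
    ENNReal.ofReal (1 - ε) * volume (cube x r) ≤
      volume {y ∈ cube x r | δ * ⨍ z in cube x r, w z ≤ w y}

end
section Aux

open Finset

lemma aux_bddAbove {d : ℕ} (A : Matrix (Fin d) (Fin d) ℝ) :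
    BddAbove {t : ℝ | ∃ e : Fin d → ℝ, vnormSq e = 1 ∧ t = Real.sqrt (vnormSq (A.mulVec e))} := by
  refine ⟨Real.sqrt (∑ j, (∑ i, |A j i|) ^ 2), ?_⟩
  rintro t ⟨e, he, rfl⟩
  refine Real.sqrt_le_sqrt ?_
  simp only [vnormSq] at he ⊢
  refine Finset.sum_le_sum fun j _ => ?_
  have habs : ∀ i, |e i| ≤ 1 := by
    intro i
    have h1 : e i ^ 2 ≤ 1 := by
      rw [← he]
      exact Finset.single_le_sum (fun k _ => sq_nonneg (e k)) (Finset.mem_univ i)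
    nlinarith [sq_abs (e i), abs_nonneg (e i)]
  have hrfl : A.mulVec e j = ∑ i, A j i * e i := rfl
  have h2 : |A.mulVec e j| ≤ ∑ i, |A j i| := by
    rw [hrfl]
    refine (Finset.abs_sum_le_sum_abs _ _).trans (Finset.sum_le_sum fun i _ => ?_)
    rw [abs_mul]
    exact mul_le_of_le_one_right (abs_nonneg _) (habs i)
  calc A.mulVec e j ^ 2 = |A.mulVec e j| ^ 2 := (sq_abs _).symm
    _ ≤ (∑ i, |A j i|) ^ 2 := pow_le_pow_left₀ (abs_nonneg _) h2 2

lemma aux_single {d : ℕ} (j : Fin d) : vnormSq (Pi.single j (1 : ℝ)) = 1 := by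
  simp only [vnormSq]
  rw [Finset.sum_eq_single j]
  · simp
  · intro b _ hbj; simp [Pi.single_apply, hbj]
  · intro hj; exact absurd (Finset.mem_univ j) hj

lemma aux_matOpNorm_nonneg {d : ℕ} (hd : 1 ≤ d) (A : Matrix (Fin d) (Fin d) ℝ) :
    0 ≤ matOpNorm A := by
  have j : Fin d := ⟨0, hd⟩
  unfold matOpNorm
  exact le_trans (Real.sqrt_nonneg _)
    (le_csSup (aux_bddAbove A) ⟨Pi.single j 1, aux_single j, rfl⟩)

lemma aux_abs_entry_le {d : ℕ} (A : Matrix (Fin d) (Fin d) ℝ) (i j : Fin d) :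
    |A i j| ≤ matOpNorm A := by
  have h1 : Real.sqrt (vnormSq (A.mulVec (Pi.single j 1))) ≤ matOpNorm A := by
    unfold matOpNorm
    exact le_csSup (aux_bddAbove A) ⟨_, aux_single j, rfl⟩
  refine le_trans ?_ h1
  have h2 : A.mulVec (Pi.single j 1) i = A i j := by
    simp [Matrix.mulVec_single]
  have h3 : A i j ^ 2 ≤ vnormSq (A.mulVec (Pi.single j 1)) := by
    rw [← h2]
    simp only [vnormSq]
    exact Finset.single_le_sum (f := fun k => A.mulVec (Pi.single j 1) k ^ 2)
      (fun k _ => sq_nonneg _) (Finset.mem_univ i)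
  calc |A i j| = Real.sqrt (A i j ^ 2) := (Real.sqrt_sq_eq_abs _).symm
    _ ≤ _ := Real.sqrt_le_sqrt h3

lemma aux_qf_eq {d : ℕ} (A : Matrix (Fin d) (Fin d) ℝ) (e : Fin d → ℝ) :
    qf A e = ∑ i, ∑ j, e i * e j * A i j := by
  simp only [qf, dotProduct, Matrix.mulVec, Finset.mul_sum]
  exact Finset.sum_congr rfl fun i _ => Finset.sum_congr rfl fun j _ => by ring

lemma aux_abs_qf_le {d : ℕ} (hd : 1 ≤ d) (A : Matrix (Fin d) (Fin d) ℝ) (e : Fin d → ℝ) :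
    |qf A e| ≤ (∑ i, |e i|) ^ 2 * matOpNorm A := by
  rw [aux_qf_eq]
  calc |∑ i, ∑ j, e i * e j * A i j| ≤ ∑ i, ∑ j, |e i * e j * A i j| :=
        (Finset.abs_sum_le_sum_abs _ _).trans
          (Finset.sum_le_sum fun i _ => Finset.abs_sum_le_sum_abs _ _)
    _ ≤ ∑ i, ∑ j, |e i| * |e j| * matOpNorm A := by
        refine Finset.sum_le_sum fun i _ => Finset.sum_le_sum fun j _ => ?_
        rw [abs_mul, abs_mul]
        exact mul_le_mul_of_nonneg_left (aux_abs_entry_le A i j)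
          (mul_nonneg (abs_nonneg _) (abs_nonneg _))
    _ = (∑ i, |e i|) ^ 2 * matOpNorm A := by
        simp only [← Finset.sum_mul]
        congr 1
        rw [sq, Finset.sum_mul_sum]

open Set in
lemma aux_cube_eq {n : ℕ} (x : Fin n → ℝ) (r : ℝ) :
    cube x r = Set.pi Set.univ fun i => Set.Ioo (x i - r) (x i + r) := by
  ext y
  simp only [cube, Set.mem_setOf_eq, Set.mem_pi, Set.mem_univ, true_implies, Set.mem_Ioo]
  refine forall_congr' fun i => ?_
  rw [abs_sub_lt_iff]
  constructor <;> rintro ⟨h1, h2⟩ <;> constructor <;> linarith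

lemma aux_volume_cube {n : ℕ} (x : Fin n → ℝ) {r : ℝ} (hr : 0 < r) :
    MeasureTheory.volume (cube x r) = ENNReal.ofReal ((2 * r) ^ n) := by
  rw [aux_cube_eq, MeasureTheory.volume_pi_pi]
  simp only [Real.volume_Ioo]
  rw [Finset.prod_congr rfl fun i _ => by rw [show x i + r - (x i - r) = 2 * r by ring]]
  rw [Finset.prod_const, Finset.card_univ, Fintype.card_fin]
  exact (ENNReal.ofReal_pow (by positivity) n).symm

lemma aux_key_id {r R p : ℝ} (nn : ℝ) (hr : 0 < r) (hR : 0 < R) :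
    r ^ ((2 : ℝ) - nn) * (2 * r) ^ nn * (R / r) ^ (nn / p) * (2 * R) ^ (-nn)
      = (r / R) ^ (2 - nn / p) * R ^ ((2 : ℝ) - nn) := by
  rw [Real.rpow_def_of_pos hr, Real.rpow_def_of_pos (by positivity : (0:ℝ) < 2 * r),
    Real.rpow_def_of_pos (by positivity : (0:ℝ) < R / r),
    Real.rpow_def_of_pos (by positivity : (0:ℝ) < 2 * R),
    Real.rpow_def_of_pos (by positivity : (0:ℝ) < r / R), Real.rpow_def_of_pos hR,
    ← Real.exp_add, ← Real.exp_add, ← Real.exp_add, ← Real.exp_add]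
  congr 1
  rw [Real.log_mul two_ne_zero hr.ne', Real.log_mul two_ne_zero hR.ne',
    Real.log_div hR.ne' hr.ne', Real.log_div hr.ne' hR.ne']
  ring

end Aux

theorem statement2 {n d : ℕ} (hn : 3 ≤ n) (hd : 1 ≤ d) (p C_V : ℝ) (hp : 1 < p)
    (hCV : 0 < C_V) (V : (Fin n → ℝ) → Matrix (Fin d) (Fin d) ℝ)
    (hW : IsMatrixWeight V) (hBp : MemBp p C_V V) :
    ∀ (x : Fin n → ℝ) (r R : ℝ), 0 < r → r < R → ∀ e : Fin d → ℝ,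
      qf (Psi x r V) e ≤ C_V * (r / R) ^ (2 - (n : ℝ) / p) * qf (Psi x R V) e := by
  obtain ⟨hmeas, hpsd, hnorm⟩ := hW
  obtain ⟨hBpInt, hBpIneq⟩ := hBp
  intro x r R hr hrR e
  have hR : 0 < R := hr.trans hrR
  have hp0 : (0 : ℝ) < p := by linarith
  set f : (Fin n → ℝ) → ℝ := fun y => qf (V y) e with hf
  set c : ℝ := (∑ i, |e i|) ^ 2 with hc
  have hc0 : 0 ≤ c := sq_nonneg _
  -- nonnegativity of f a.e.
  have hfnn : ∀ᵐ y ∂(volume : Measure (Fin n → ℝ)), 0 ≤ f y := by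
    refine hpsd.mono fun y hy => ?_
    have h := hy.dotProduct_mulVec_nonneg e
    have hse : star e = e := funext fun i => star_trivial _
    rw [hse] at h
    exact h
  -- measurability of f
  have hmf : Measurable f := by
    have : f = fun y => ∑ i, ∑ j, e i * e j * V y i j := funext fun y => aux_qf_eq (V y) e
    rw [this]
    exact Finset.measurable_sum _ fun i _ =>
      Finset.measurable_sum _ fun j _ => (hmeas i j).const_mul _
  -- integrability of entries on cubes
  have hentry : ∀ (x0 : Fin n → ℝ) (r0 : ℝ), 0 < r0 → ∀ i j,
      IntegrableOn (fun y => V y i j) (cube x0 r0) := by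
    intro x0 r0 hr0 i j
    refine Integrable.mono (hnorm x0 r0 hr0) ((hmeas i j).aestronglyMeasurable) ?_
    refine Filter.Eventually.of_forall fun y => ?_
    rw [Real.norm_eq_abs, Real.norm_eq_abs]
    exact (aux_abs_entry_le _ i j).trans (le_abs_self _)
  -- integrability of f on cubes
  have hfint : ∀ (x0 : Fin n → ℝ) (r0 : ℝ), 0 < r0 → IntegrableOn f (cube x0 r0) := by
    intro x0 r0 hr0
    refine Integrable.mono ((hnorm x0 r0 hr0).const_mul c) hmf.aestronglyMeasurable ?_
    refine Filter.Eventually.of_forall fun y => ?_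
    rw [Real.norm_eq_abs, Real.norm_eq_abs]
    exact (aux_abs_qf_le hd (V y) e).trans (le_abs_self _)
  -- integrability of f ^ p on cubes
  have hmfp : Measurable fun y => f y ^ p :=
    (Real.continuous_rpow_const hp0.le).measurable.comp hmf
  have hfpint : ∀ (x0 : Fin n → ℝ) (r0 : ℝ), 0 < r0 →
      IntegrableOn (fun y => f y ^ p) (cube x0 r0) := by
    intro x0 r0 hr0
    refine Integrable.mono ((hBpInt x0 r0 hr0).const_mul (c ^ p)) hmfp.aestronglyMeasurable ?_
    refine (ae_restrict_of_ae hfnn).mono fun y hy => ?_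
    rw [Real.norm_eq_abs, Real.norm_eq_abs, abs_of_nonneg (Real.rpow_nonneg hy p)]
    have h1 : f y ≤ c * matOpNorm (V y) := (le_abs_self _).trans (aux_abs_qf_le hd (V y) e)
    have h2 : (0 : ℝ) ≤ matOpNorm (V y) := aux_matOpNorm_nonneg hd _
    calc f y ^ p ≤ (c * matOpNorm (V y)) ^ p := Real.rpow_le_rpow hy h1 hp0.le
      _ = c ^ p * matOpNorm (V y) ^ p := Real.mul_rpow hc0 h2
      _ ≤ |c ^ p * matOpNorm (V y) ^ p| := le_abs_self _
  -- qf of matInt equals integral of f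
  have hint_qf : ∀ (x0 : Fin n → ℝ) (r0 : ℝ), 0 < r0 →
      qf (matInt V (cube x0 r0)) e = ∫ y in cube x0 r0, f y := by
    intro x0 r0 hr0
    have h1 : f = fun y => ∑ i, ∑ j, e i * e j * V y i j := funext fun y => aux_qf_eq (V y) e
    rw [h1, aux_qf_eq]
    rw [integral_finset_sum _ fun i _ =>
      integrable_finset_sum _ fun j _ => ((hentry x0 r0 hr0 i j).const_mul _)]
    refine Finset.sum_congr rfl fun i _ => ?_
    rw [integral_finset_sum _ fun j _ => ((hentry x0 r0 hr0 i j).const_mul _)]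
    refine Finset.sum_congr rfl fun j _ => ?_
    rw [integral_const_mul]
    rfl
  -- qf of matAvg
  have havg_qf : ∀ (x0 : Fin n → ℝ) (r0 : ℝ), 0 < r0 →
      qf (matAvg V (cube x0 r0)) e
        = (volume (cube x0 r0)).toReal⁻¹ * ∫ y in cube x0 r0, f y := by
    intro x0 r0 hr0
    rw [← hint_qf x0 r0 hr0, aux_qf_eq, aux_qf_eq]
    rw [Finset.mul_sum]
    refine Finset.sum_congr rfl fun i _ => ?_
    rw [Finset.mul_sum]
    refine Finset.sum_congr rfl fun j _ => ?_
    simp only [matAvg, matInt, Matrix.of_apply, setAverage_eq, smul_eq_mul, measureReal_def]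
    ring
  -- volumes
  have hvolr : volume (cube x r) = ENNReal.ofReal ((2 * r) ^ n) := aux_volume_cube x hr
  have hvolR : volume (cube x R) = ENNReal.ofReal ((2 * R) ^ n) := aux_volume_cube x hR
  have htr : (volume (cube x r)).toReal = (2 * r) ^ n := by
    rw [hvolr, ENNReal.toReal_ofReal (by positivity)]
  have htR : (volume (cube x R)).toReal = (2 * R) ^ n := by
    rw [hvolR, ENNReal.toReal_ofReal (by positivity)]
  set vr : ℝ := (2 * r) ^ n with hvr
  set vR : ℝ := (2 * R) ^ n with hvR
  have hvr0 : (0 : ℝ) < vr := by positivity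
  have hvR0 : (0 : ℝ) < vR := by positivity
  set Ir : ℝ := ∫ y in cube x r, f y with hIr
  set IR : ℝ := ∫ y in cube x R, f y with hIR
  set Jr : ℝ := ∫ y in cube x r, f y ^ p with hJr
  set JR : ℝ := ∫ y in cube x R, f y ^ p with hJR
  have hIrnn : 0 ≤ Ir := integral_nonneg_of_ae (ae_restrict_of_ae hfnn)
  have hIRnn : 0 ≤ IR := integral_nonneg_of_ae (ae_restrict_of_ae hfnn)
  have hfpnn : ∀ᵐ y ∂(volume : Measure (Fin n → ℝ)), 0 ≤ f y ^ p :=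
    hfnn.mono fun y hy => Real.rpow_nonneg hy p
  have hJRnn : 0 ≤ JR := integral_nonneg_of_ae (ae_restrict_of_ae hfpnn)
  -- instances for Jensen
  haveI hfinr : IsFiniteMeasure (volume.restrict (cube x r)) := by
    constructor
    rw [Measure.restrict_apply_univ, hvolr]
    exact ENNReal.ofReal_lt_top
  haveI hnzr : NeZero (volume.restrict (cube x r)) := by
    constructor
    intro h0
    have h1 := congrArg (fun μ : Measure (Fin n → ℝ) => μ Set.univ) h0
    simp only [Measure.restrict_apply_univ, Measure.coe_zero, Pi.zero_apply] at h1
    rw [hvolr, ENNReal.ofReal_eq_zero] at h1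
    have : (0 : ℝ) < (2 * r) ^ n := by positivity
    linarith
  -- Jensen's inequality on the small cube
  have hjen : ((volume (cube x r)).toReal⁻¹ * Ir) ^ p
      ≤ (volume (cube x r)).toReal⁻¹ * Jr := by
    have hcont : ContinuousOn (fun t : ℝ => t ^ p) (Set.Ici 0) :=
      (Real.continuous_rpow_const hp0.le).continuousOn
    have hmem : ∀ᵐ y ∂(volume.restrict (cube x r)), f y ∈ Set.Ici (0 : ℝ) :=
      ae_restrict_of_ae (hfnn.mono fun y hy => hy)
    have h := (convexOn_rpow hp.le).map_average_le hcont isClosed_Ici hmem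
      (hfint x r hr) (hfpint x r hr)
    rw [average_eq, average_eq, measureReal_def, Measure.restrict_apply_univ] at h
    simpa [smul_eq_mul] using h
  -- monotonicity of the integral of f ^ p
  have hsub : cube x r ⊆ cube x R := fun y hy i => (hy i).trans hrR
  have hmono : Jr ≤ JR :=
    setIntegral_mono_set (hfpint x R hR) (ae_restrict_of_ae hfpnn) hsub.eventuallyLE
  -- reverse Hölder at scale R
  have hbp : ((volume (cube x R)).toReal⁻¹ * JR) ^ (1 / p)
      ≤ C_V * ((volume (cube x R)).toReal⁻¹ * IR) := by
    have h := hBpIneq x R hR e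
    rw [setAverage_eq, smul_eq_mul, havg_qf x R hR] at h
    exact h
  rw [htr] at hjen
  rw [htR] at hbp
  -- main chain
  have hstep1 : (vr⁻¹ * Ir) ^ p ≤ vr⁻¹ * JR :=
    hjen.trans (mul_le_mul_of_nonneg_left hmono (by positivity))
  have hann : 0 ≤ vr⁻¹ * Ir := by positivity
  have hstep2 : vr⁻¹ * Ir ≤ (vr⁻¹ * vR) ^ (1 / p) * (C_V * (vR⁻¹ * IR)) := by
    have h1 : vr⁻¹ * Ir = ((vr⁻¹ * Ir) ^ p) ^ (1 / p) := by
      rw [← Real.rpow_mul hann, mul_one_div_cancel hp0.ne', Real.rpow_one]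
    calc vr⁻¹ * Ir = ((vr⁻¹ * Ir) ^ p) ^ (1 / p) := h1
      _ ≤ (vr⁻¹ * JR) ^ (1 / p) :=
          Real.rpow_le_rpow (Real.rpow_nonneg hann p) hstep1 (by positivity)
      _ = ((vr⁻¹ * vR) * (vR⁻¹ * JR)) ^ (1 / p) := by
          rw [show (vr⁻¹ * vR) * (vR⁻¹ * JR) = (vR * vR⁻¹) * (vr⁻¹ * JR) by ring,
            mul_inv_cancel₀ hvR0.ne', one_mul]
      _ = (vr⁻¹ * vR) ^ (1 / p) * (vR⁻¹ * JR) ^ (1 / p) :=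
          Real.mul_rpow (by positivity) (mul_nonneg (le_of_lt (inv_pos.mpr hvR0)) hJRnn)
      _ ≤ (vr⁻¹ * vR) ^ (1 / p) * (C_V * (vR⁻¹ * IR)) :=
          mul_le_mul_of_nonneg_left hbp (Real.rpow_nonneg (by positivity) _)
  have hIr_le : Ir ≤ vr * ((vr⁻¹ * vR) ^ (1 / p) * (C_V * (vR⁻¹ * IR))) := by
    have h2 := mul_le_mul_of_nonneg_left hstep2 hvr0.le
    rwa [← mul_assoc, mul_inv_cancel₀ hvr0.ne', one_mul] at h2
  -- identify qf (Psi _ _ V) e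
  have hPsi : ∀ r0 : ℝ, 0 < r0 →
      qf (Psi x r0 V) e = r0 ^ ((2 : ℝ) - n) * ∫ y in cube x r0, f y := by
    intro r0 hr0
    have hsmul : qf (r0 ^ ((2 : ℝ) - n) • matInt V (cube x r0)) e
        = r0 ^ ((2 : ℝ) - n) * qf (matInt V (cube x r0)) e := by
      rw [aux_qf_eq, aux_qf_eq, Finset.mul_sum]
      refine Finset.sum_congr rfl fun i _ => ?_
      rw [Finset.mul_sum]
      refine Finset.sum_congr rfl fun j _ => ?_
      simp only [Matrix.smul_apply, smul_eq_mul]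
      ring
    rw [show Psi x r0 V = r0 ^ ((2 : ℝ) - n) • matInt V (cube x r0) from rfl, hsmul,
      hint_qf x r0 hr0]
  -- conversions from nat powers to real powers
  have hratio : vr⁻¹ * vR = ((R / r) : ℝ) ^ n := by
    rw [inv_mul_eq_div, hvr, hvR, ← div_pow, mul_div_mul_left R r two_ne_zero]
  have hx2 : ((R / r : ℝ) ^ n) ^ ((1 : ℝ) / p) = (R / r) ^ ((n : ℝ) / p) := by
    rw [← Real.rpow_natCast (R / r) n, ← Real.rpow_mul (by positivity), mul_one_div]
  have hd4 : vR⁻¹ = (2 * R) ^ (-(n : ℝ)) := by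
    rw [Real.rpow_neg (by positivity : (0 : ℝ) ≤ 2 * R), Real.rpow_natCast, hvR]
  rw [hPsi r hr, hPsi R hR]
  calc r ^ ((2 : ℝ) - n) * ∫ y in cube x r, f y
      ≤ r ^ ((2 : ℝ) - n) * (vr * ((vr⁻¹ * vR) ^ (1 / p) * (C_V * (vR⁻¹ * IR)))) :=
        mul_le_mul_of_nonneg_left hIr_le (Real.rpow_nonneg hr.le _)
    _ = r ^ ((2 : ℝ) - n) * (2 * r) ^ (n : ℝ) * (R / r) ^ ((n : ℝ) / p) * (2 * R) ^ (-(n : ℝ))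
          * (C_V * IR) := by
        rw [hratio, hx2, hd4, hvr, ← Real.rpow_natCast (2 * r) n]
        ring
    _ = (r / R) ^ (2 - (n : ℝ) / p) * R ^ ((2 : ℝ) - n) * (C_V * IR) := by
        rw [aux_key_id (n : ℝ) hr hR]
    _ = C_V * (r / R) ^ (2 - (n : ℝ) / p) * (R ^ ((2 : ℝ) - n) * ∫ y in cube x R, f y) := by
        rw [hIR]
        ring
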